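/- Let cov_soc(A_n) denote the soc-covering number of the matrix A_n with sparsity pattern A_n[e,j] = 0 iff j ∈ e (rows indexed by 2-subsets e of [n], columns by j ∈ [n]). Then for any n_0 ≥ 2, cov_soc(A_{3n_0²}) ≥ cov_soc(A_{n_0}) + 1. Consequently cov_soc(A_n) → ∞ as n → ∞. -/

import Mathlib

/-- The three-dimensional second-order cone. -/
def soc (v : Fin 3 → ℝ) : Prop := Real.sqrt (v 0 ^ 2 + v 1 ^ 2) ≤ v 2

/-- A matrix has second-order cone rank at most one. -/
def SocRankOne {I J : Type*} (M : I → J → ℝ) : Prop :=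
  ∃ (a : I → Fin 3 → ℝ) (b : J → Fin 3 → ℝ),
    (∀ i, soc (a i)) ∧ (∀ j, soc (b j)) ∧
    ∀ i j, M i j = ∑ x, a i x * b j x

/-- Rows of `A_n` are indexed by 2-element subsets of `[n]`, i.e. non-diagonal
elements of `Sym2 (Fin n)`. -/
def Edges (n : ℕ) : Type := {e : Sym2 (Fin n) // ¬ e.IsDiag}

/-- The soc-covering number of (any matrix with) the sparsity pattern of `A_n`:
`A_n[e,j] = 0` iff `j ∈ e`. -/
noncomputable def covSocA (n : ℕ) : ℕ :=
  sInf {k | ∃ M : Fin k → Edges n → Fin n → ℝ,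
    (∀ l, SocRankOne (M l)) ∧
    ∀ (e : Edges n) (j : Fin n), (∑ l, M l e j) = 0 ↔ j ∈ e.val}

/-! ### Auxiliary material -/

open Finset

instance edgesFintype (n : ℕ) : Fintype (Edges n) := by
  unfold Edges; infer_instance

/-- The existence predicate used inside `covSocA`. -/
def CovVal (n k : ℕ) : Prop :=
  ∃ M : Fin k → Edges n → Fin n → ℝ,
    (∀ l, SocRankOne (M l)) ∧
    ∀ (e : Edges n) (j : Fin n), (∑ l, M l e j) = 0 ↔ j ∈ e.val

lemma covSocA_eq (n : ℕ) : covSocA n = sInf {k | CovVal n k} := rfl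

/-- Basic consequences of being in the cone, sqrt-free. -/
lemma soc_sq {u : Fin 3 → ℝ} (hu : soc u) :
    u 0 ^ 2 + u 1 ^ 2 ≤ u 2 ^ 2 ∧ 0 ≤ u 2 := by
  have h0 : (0:ℝ) ≤ u 0 ^ 2 + u 1 ^ 2 := by positivity
  have hs : 0 ≤ Real.sqrt (u 0 ^ 2 + u 1 ^ 2) := Real.sqrt_nonneg _
  have h2 : 0 ≤ u 2 := le_trans hs hu
  have hq : (Real.sqrt (u 0 ^ 2 + u 1 ^ 2)) ^ 2 = u 0 ^ 2 + u 1 ^ 2 := Real.sq_sqrt h0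
  refine ⟨?_, h2⟩
  nlinarith [mul_self_le_mul_self hs hu, hq]

lemma soc_zero {u : Fin 3 → ℝ} (hu : soc u) (h : u 2 ≤ 0) :
    u 0 = 0 ∧ u 1 = 0 ∧ u 2 = 0 := by
  obtain ⟨hle, h2⟩ := soc_sq hu
  have h2' : u 2 = 0 := le_antisymm h h2
  constructor
  · nlinarith [sq_nonneg (u 0), sq_nonneg (u 1)]
  constructor
  · nlinarith [sq_nonneg (u 0), sq_nonneg (u 1)]
  · exact h2'

/-- Cauchy–Schwarz in the plane, in the form we need. -/
lemma cs_plane {u0 u1 v0 v1 : ℝ} :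
    (u0 * v0 + u1 * v1) ^ 2 ≤ (u0 ^ 2 + u1 ^ 2) * (v0 ^ 2 + v1 ^ 2) := by
  nlinarith [sq_nonneg (u0 * v1 - u1 * v0)]

/-- Inner products of cone vectors are nonnegative. -/
lemma ip_nonneg {u v : Fin 3 → ℝ} (hu : soc u) (hv : soc v) :
    0 ≤ u 0 * v 0 + u 1 * v 1 + u 2 * v 2 := by
  obtain ⟨hu1, hu2⟩ := soc_sq hu
  obtain ⟨hv1, hv2⟩ := soc_sq hv
  have h1 : (u 0 * v 0 + u 1 * v 1) ^ 2 ≤ (u 0 ^ 2 + u 1 ^ 2) * (v 0 ^ 2 + v 1 ^ 2) :=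
    cs_plane
  have h2 : (u 0 ^ 2 + u 1 ^ 2) * (v 0 ^ 2 + v 1 ^ 2) ≤ (u 2 * v 2) ^ 2 := by
    nlinarith [sq_nonneg (u 0), sq_nonneg (u 1), sq_nonneg (v 0), sq_nonneg (v 1)]
  have h3 : (u 0 * v 0 + u 1 * v 1) ^ 2 ≤ (u 2 * v 2) ^ 2 := le_trans h1 h2
  have h4 : 0 ≤ u 2 * v 2 := mul_nonneg hu2 hv2
  nlinarith [h3, h4]

/-- Orthogonality to an interior point of the cone forces the zero vector. -/
lemma ip_interior {u v : Fin 3 → ℝ} (hu : soc u) (hv : soc v)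
    (hip : u 0 * v 0 + u 1 * v 1 + u 2 * v 2 = 0)
    (hint : v 0 ^ 2 + v 1 ^ 2 < v 2 ^ 2) : u 2 = 0 := by
  obtain ⟨hu1, hu2⟩ := soc_sq hu
  obtain ⟨hv1, hv2⟩ := soc_sq hv
  by_contra h
  have hu2' : 0 < u 2 := lt_of_le_of_ne hu2 (Ne.symm h)
  have hv2' : 0 < v 2 := by nlinarith [sq_nonneg (v 0), sq_nonneg (v 1)]
  have h1 : (u 0 * v 0 + u 1 * v 1) ^ 2 ≤ (u 0 ^ 2 + u 1 ^ 2) * (v 0 ^ 2 + v 1 ^ 2) :=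
    cs_plane
  have hv0 : (0:ℝ) ≤ v 0 ^ 2 + v 1 ^ 2 := by positivity
  have hp : u 0 * v 0 + u 1 * v 1 = -(u 2 * v 2) := by linarith
  have e1 : (u 0 ^ 2 + u 1 ^ 2) * (v 0 ^ 2 + v 1 ^ 2) ≤ u 2 ^ 2 * (v 0 ^ 2 + v 1 ^ 2) :=
    mul_le_mul_of_nonneg_right hu1 hv0
  have e2 : u 2 ^ 2 * (v 0 ^ 2 + v 1 ^ 2) < u 2 ^ 2 * v 2 ^ 2 :=
    mul_lt_mul_of_pos_left hint (by positivity)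
  have hfinal : u 2 ^ 2 * v 2 ^ 2 < u 2 ^ 2 * v 2 ^ 2 := by
    calc u 2 ^ 2 * v 2 ^ 2 = (u 0 * v 0 + u 1 * v 1) ^ 2 := by rw [hp]; ring
    _ ≤ (u 0 ^ 2 + u 1 ^ 2) * (v 0 ^ 2 + v 1 ^ 2) := h1
    _ ≤ u 2 ^ 2 * (v 0 ^ 2 + v 1 ^ 2) := e1
    _ < u 2 ^ 2 * v 2 ^ 2 := e2
  exact lt_irrefl _ hfinal

/-- Orthogonality to a boundary point of the cone: the equality case of
Cauchy–Schwarz pins down the first two coordinates. -/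
lemma ip_boundary {u v : Fin 3 → ℝ} (hu : soc u) (hv : soc v)
    (hip : u 0 * v 0 + u 1 * v 1 + u 2 * v 2 = 0)
    (hv2 : 0 < v 2) (hbd : v 0 ^ 2 + v 1 ^ 2 = v 2 ^ 2) :
    u 0 * v 2 = -(u 2 * v 0) ∧ u 1 * v 2 = -(u 2 * v 1) := by
  obtain ⟨hu1, hu2⟩ := soc_sq hu
  have h1 : (u 0 * v 0 + u 1 * v 1) ^ 2 ≤ (u 0 ^ 2 + u 1 ^ 2) * (v 0 ^ 2 + v 1 ^ 2) :=
    cs_plane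
  have hp : u 0 * v 0 + u 1 * v 1 = -(u 2 * v 2) := by linarith
  have heq : u 0 ^ 2 + u 1 ^ 2 = u 2 ^ 2 := by
    have hle : u 2 ^ 2 * v 2 ^ 2 ≤ (u 0 ^ 2 + u 1 ^ 2) * v 2 ^ 2 := by
      calc u 2 ^ 2 * v 2 ^ 2 = (u 0 * v 0 + u 1 * v 1) ^ 2 := by rw [hp]; ring
      _ ≤ (u 0 ^ 2 + u 1 ^ 2) * (v 0 ^ 2 + v 1 ^ 2) := h1
      _ = (u 0 ^ 2 + u 1 ^ 2) * v 2 ^ 2 := by rw [hbd]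
    have := le_of_mul_le_mul_right hle (by positivity : (0:ℝ) < v 2 ^ 2)
    linarith [hu1]
  have key : (u 0 * v 2 + u 2 * v 0) ^ 2 + (u 1 * v 2 + u 2 * v 1) ^ 2 = 0 := by
    linear_combination (v 2 ^ 2) * heq + (u 2 ^ 2) * hbd + (2 * u 2 * v 2) * hp
  have e0 : u 0 * v 2 + u 2 * v 0 = 0 := by
    nlinarith [sq_nonneg (u 0 * v 2 + u 2 * v 0), sq_nonneg (u 1 * v 2 + u 2 * v 1)]
  have e1 : u 1 * v 2 + u 2 * v 1 = 0 := by
    nlinarith [sq_nonneg (u 0 * v 2 + u 2 * v 0), sq_nonneg (u 1 * v 2 + u 2 * v 1)]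
  constructor <;> linarith

/-- Every edge has two distinct representatives. -/
lemma edge_rep {n : ℕ} (e : Edges n) :
    ∃ i i' : Fin n, i ≠ i' ∧ e.val = s(i, i') := by
  obtain ⟨z, hz⟩ := e
  induction z using Sym2.ind with
  | _ x y =>
    exact ⟨x, y, fun h => hz (Sym2.mk_isDiag_iff.mpr h), rfl⟩

/-- Map an edge forward along an embedding. -/
def emap {m n : ℕ} (f : Fin m ↪ Fin n) (e : Edges m) : Edges n :=
  ⟨e.val.map f, fun h => e.2 ((Sym2.isDiag_map f.injective).mp h)⟩

lemma mem_emap {m n : ℕ} (f : Fin m ↪ Fin n) (e : Edges m) (j : Fin m) :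
    f j ∈ (emap f e).val ↔ j ∈ e.val := by
  constructor
  · intro h
    obtain ⟨x, hx, hfx⟩ := Sym2.mem_map.mp h
    rwa [f.injective hfx] at hx
  · intro h
    exact Sym2.mem_map.mpr ⟨j, h, rfl⟩

lemma mem_emap_src {m n : ℕ} (f : Fin m ↪ Fin n) (e : Edges m) (i : Fin n)
    (h : i ∈ (emap f e).val) : ∃ i0, i0 ∈ e.val ∧ f i0 = i :=
  Sym2.mem_map.mp h

/-- Restricting a covering along an embedding of ground sets. -/
lemma CovVal.restrict {m n k : ℕ} (f : Fin m ↪ Fin n) (h : CovVal n k) :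
    CovVal m k := by
  obtain ⟨M, hsoc, hsum⟩ := h
  refine ⟨fun l e j => M l (emap f e) (f j), ?_, ?_⟩
  · intro l
    obtain ⟨a, b, ha, hb, hab⟩ := hsoc l
    exact ⟨fun e => a (emap f e), fun j => b (f j), fun e => ha _, fun j => hb _,
      fun e j => hab _ _⟩
  · intro e j
    rw [hsum (emap f e) (f j)]
    exact mem_emap f e j

/-- Some covering always exists. -/
lemma covval_exists (n : ℕ) : ∃ k, CovVal n k := by
  classical
  refine ⟨Fintype.card (Edges n × Fin n), ?_⟩
  set σ := (Fintype.equivFin (Edges n × Fin n)).symm with hσ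
  refine ⟨fun l e j =>
      (if e = (σ l).1 ∧ ¬ (σ l).2 ∈ (σ l).1.val then (1:ℝ) else 0) *
      (if j = (σ l).2 then (1:ℝ) else 0), ?_, ?_⟩
  · intro l
    refine ⟨fun e => ![0, 0, if e = (σ l).1 ∧ ¬ (σ l).2 ∈ (σ l).1.val then 1 else 0],
      fun j => ![0, 0, if j = (σ l).2 then 1 else 0], ?_, ?_, ?_⟩
    · intro e
      simp only [soc, Matrix.cons_val_zero, Matrix.cons_val_one, Matrix.head_cons]
      rw [show (0:ℝ)^2 + (0:ℝ)^2 = 0 by ring, Real.sqrt_zero]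
      split
      · exact zero_le_one
      · exact le_refl _
    · intro j
      simp only [soc, Matrix.cons_val_zero, Matrix.cons_val_one, Matrix.head_cons]
      rw [show (0:ℝ)^2 + (0:ℝ)^2 = 0 by ring, Real.sqrt_zero]
      split
      · exact zero_le_one
      · exact le_refl _
    · intro e j
      simp [Fin.sum_univ_three]
  · intro e j
    have hterm : ∀ l : Fin (Fintype.card (Edges n × Fin n)),
        (if e = (σ l).1 ∧ ¬ (σ l).2 ∈ (σ l).1.val then (1:ℝ) else 0) *
        (if j = (σ l).2 then (1:ℝ) else 0)
        = if σ l = (e, j) ∧ ¬ j ∈ e.val then 1 else 0 := by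
      intro l
      by_cases h1 : e = (σ l).1 <;> by_cases h2 : j = (σ l).2 <;>
        simp [Prod.ext_iff, h1, h2, eq_comm] <;> tauto
    have hsum : (∑ l, (if e = (σ l).1 ∧ ¬ (σ l).2 ∈ (σ l).1.val then (1:ℝ) else 0) *
        (if j = (σ l).2 then (1:ℝ) else 0))
        = ∑ p : Edges n × Fin n, (if p = (e, j) ∧ ¬ j ∈ e.val then (1:ℝ) else 0) := by
      rw [Finset.sum_congr rfl fun l _ => hterm l]
      exact Equiv.sum_comp σ (fun p => if p = (e, j) ∧ ¬ j ∈ e.val then (1:ℝ) else 0)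
    rw [hsum]
    by_cases hj : j ∈ e.val
    · simp [hj]
    · have hrw : ∀ p : Edges n × Fin n,
          (if p = (e, j) ∧ ¬ j ∈ e.val then (1:ℝ) else 0) =
          (if p = (e, j) then (1:ℝ) else 0) := fun p => by simp [hj]
      rw [Finset.sum_congr rfl fun p _ => hrw p,
        Finset.sum_ite_eq' Finset.univ (e, j) (fun _ => (1:ℝ))]
      simp [hj]

/-- No covering with zero matrices once `n ≥ 3`. -/
lemma covval_zero {n : ℕ} (h3 : 3 ≤ n) : ¬ CovVal n 0 := by
  rintro ⟨M, _, hsum⟩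
  set i0 : Fin n := ⟨0, by omega⟩
  set i1 : Fin n := ⟨1, by omega⟩
  set j2 : Fin n := ⟨2, by omega⟩
  have hne : ¬ (s(i0, i1) : Sym2 (Fin n)).IsDiag := by
    rw [Sym2.mk_isDiag_iff]
    intro h
    have := Fin.val_eq_val i0 i1
    simp [i0, i1, Fin.ext_iff] at h
  have hmem := (hsum ⟨s(i0, i1), hne⟩ j2).mp (by simp)
  rw [Sym2.mem_iff] at hmem
  rcases hmem with h | h <;> simp [i0, i1, j2, Fin.ext_iff] at h

/-! ### The key combinatorial lemma -/

lemma key_lemma (n0 : ℕ) (h2 : 2 ≤ n0)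
    (M : Edges (3 * n0 ^ 2) → Fin (3 * n0 ^ 2) → ℝ)
    (hM : SocRankOne M)
    (hz : ∀ (e : Edges (3 * n0 ^ 2)) (j : Fin (3 * n0 ^ 2)), j ∈ e.val → M e j = 0) :
    ∃ C : Finset (Fin (3 * n0 ^ 2)), n0 ≤ C.card ∧
      ∀ (e : Edges (3 * n0 ^ 2)) (j : Fin (3 * n0 ^ 2)),
        (∀ i ∈ e.val, i ∈ C) → j ∈ C → M e j = 0 := by
  classical
  obtain ⟨a, b, ha, hb, hab⟩ := hM
  have hM_ip : ∀ e j, M e j = a e 0 * b j 0 + a e 1 * b j 1 + a e 2 * b j 2 := by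
    intro e j; rw [hab, Fin.sum_univ_three]
  have hip : ∀ e j, j ∈ e.val →
      a e 0 * b j 0 + a e 1 * b j 1 + a e 2 * b j 2 = 0 := by
    intro e j h; rw [← hM_ip]; exact hz e j h
  set Z : Finset (Fin (3 * n0 ^ 2)) := univ.filter (fun j => b j 2 ≤ 0) with hZdef
  set I : Finset (Fin (3 * n0 ^ 2)) :=
    univ.filter (fun j => (b j 0) ^ 2 + (b j 1) ^ 2 < (b j 2) ^ 2) with hIdef
  set B : Finset (Fin (3 * n0 ^ 2)) :=
    univ.filter (fun j => 0 < b j 2 ∧ (b j 0) ^ 2 + (b j 1) ^ 2 = (b j 2) ^ 2) with hBdef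
  have hcover : (univ : Finset (Fin (3 * n0 ^ 2))) ⊆ Z ∪ I ∪ B := by
    intro j _
    rcases le_or_gt (b j 2) 0 with h | h
    · exact mem_union_left _ (mem_union_left _ (by simp [hZdef, h]))
    · rcases lt_or_eq_of_le (soc_sq (hb j)).1 with h' | h'
      · exact mem_union_left _ (mem_union_right _ (by simp [hIdef, h']))
      · exact mem_union_right _ (by simp [hBdef, h, h'])
  have hcard : 3 * n0 ^ 2 ≤ Z.card + I.card + B.card := by
    calc 3 * n0 ^ 2 = (univ : Finset (Fin (3 * n0 ^ 2))).card := by simp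
    _ ≤ (Z ∪ I ∪ B).card := card_le_card hcover
    _ ≤ (Z ∪ I).card + B.card := card_union_le _ _
    _ ≤ Z.card + I.card + B.card := by
        have := card_union_le Z I; omega
  by_cases hZ : n0 ≤ Z.card
  · refine ⟨Z, hZ, ?_⟩
    intro e j _ hj
    have hj' : b j 2 ≤ 0 := by
      have := mem_filter.mp hj; exact this.2
    obtain ⟨h0, h1, h2⟩ := soc_zero (hb j) hj'
    rw [hM_ip, h0, h1, h2]; ring
  by_cases hI : n0 ≤ I.card
  · refine ⟨I, hI, ?_⟩
    intro e j he hj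
    obtain ⟨i, i', hne, hrep⟩ := edge_rep e
    have hi : i ∈ e.val := by rw [hrep]; exact Sym2.mem_mk_left i i'
    have hiI : i ∈ I := he i hi
    have hint : (b i 0) ^ 2 + (b i 1) ^ 2 < (b i 2) ^ 2 := (mem_filter.mp hiI).2
    have ha2 : a e 2 = 0 := ip_interior (ha e) (hb i) (hip e i hi) hint
    obtain ⟨h0, h1, h2⟩ := soc_zero (ha e) (le_of_eq ha2)
    rw [hM_ip, h0, h1, h2]; ring
  -- boundary columns dominate
  set d : Fin (3 * n0 ^ 2) → ℝ × ℝ := fun j => (b j 0 / b j 2, b j 1 / b j 2) with hddef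
  have hBprop : ∀ j ∈ B, 0 < b j 2 ∧ (b j 0) ^ 2 + (b j 1) ^ 2 = (b j 2) ^ 2 :=
    fun j hj => (mem_filter.mp hj).2
  by_cases himg : n0 ≤ (B.image d).card
  · -- many distinct directions: pick representatives
    have hsec : ∀ v ∈ B.image d, ∃ j, j ∈ B ∧ d j = v := by
      intro v hv
      obtain ⟨j, hj, hdj⟩ := mem_image.mp hv
      exact ⟨j, hj, hdj⟩
    set g : ℝ × ℝ → Fin (3 * n0 ^ 2) := fun v =>
      if h : ∃ j, j ∈ B ∧ d j = v then h.choose else ⟨0, by positivity⟩ with hgdef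
    have hg : ∀ v ∈ B.image d, g v ∈ B ∧ d (g v) = v := by
      intro v hv
      obtain ⟨j, hj, hdj⟩ := hsec v hv
      have hex : ∃ j, j ∈ B ∧ d j = v := ⟨j, hj, hdj⟩
      simp only [hgdef, dif_pos hex]
      exact hex.choose_spec
    set C : Finset (Fin (3 * n0 ^ 2)) := (B.image d).image g with hCdef
    have hinj : Set.InjOn g (B.image d) := by
      intro v hv w hw hgvw
      have h1 := (hg v hv).2
      have h2 := (hg w hw).2
      rw [← h1, ← h2, hgvw]
    have hCcard : n0 ≤ C.card := by
      rw [hCdef, card_image_of_injOn hinj]; exact himg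
    have hCsub : ∀ i ∈ C, i ∈ B := by
      intro i hi
      obtain ⟨v, hv, rfl⟩ := mem_image.mp hi
      exact (hg v hv).1
    have hCd : ∀ i ∈ C, ∀ i' ∈ C, d i = d i' → i = i' := by
      intro i hi i' hi' hdii
      obtain ⟨v, hv, rfl⟩ := mem_image.mp hi
      obtain ⟨w, hw, rfl⟩ := mem_image.mp hi'
      have h1 := (hg v hv).2
      have h2 := (hg w hw).2
      rw [h1, h2] at hdii
      rw [hdii]
    refine ⟨C, hCcard, ?_⟩
    intro e j he hj
    obtain ⟨i, i', hne, hrep⟩ := edge_rep e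
    have hi : i ∈ e.val := by rw [hrep]; exact Sym2.mem_mk_left i i'
    have hi' : i' ∈ e.val := by rw [hrep]; exact Sym2.mem_mk_right i i'
    have hiC := he i hi
    have hi'C := he i' hi'
    obtain ⟨hbi2, hbibd⟩ := hBprop i (hCsub i hiC)
    obtain ⟨hbi'2, hbi'bd⟩ := hBprop i' (hCsub i' hi'C)
    obtain ⟨o1, o2⟩ := ip_boundary (ha e) (hb i) (hip e i hi) hbi2 hbibd
    obtain ⟨o1', o2'⟩ := ip_boundary (ha e) (hb i') (hip e i' hi') hbi'2 hbi'bd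
    have ha2 : a e 2 = 0 := by
      by_contra hne2
      apply hne
      apply hCd i hiC i' hi'C
      have hfst : b i 0 * b i' 2 = b i' 0 * b i 2 := by
        have hc : a e 2 * (b i 0 * b i' 2) = a e 2 * (b i' 0 * b i 2) := by
          linear_combination (b i' 2) * o1 - (b i 2) * o1'
        exact mul_left_cancel₀ hne2 hc
      have hsnd : b i 1 * b i' 2 = b i' 1 * b i 2 := by
        have hc : a e 2 * (b i 1 * b i' 2) = a e 2 * (b i' 1 * b i 2) := by
          linear_combination (b i' 2) * o2 - (b i 2) * o2'
        exact mul_left_cancel₀ hne2 hc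
      have h1 : b i 0 / b i 2 = b i' 0 / b i' 2 :=
        (div_eq_div_iff hbi2.ne' hbi'2.ne').mpr (by linarith [hfst])
      have h2 : b i 1 / b i 2 = b i' 1 / b i' 2 :=
        (div_eq_div_iff hbi2.ne' hbi'2.ne').mpr (by linarith [hsnd])
      exact Prod.ext h1 h2
    obtain ⟨h0, h1, h2⟩ := soc_zero (ha e) (le_of_eq ha2)
    rw [hM_ip, h0, h1, h2]; ring
  · -- a large fiber: all columns proportional
    have hmaps : ∀ x ∈ B, d x ∈ B.image d := fun x hx => mem_image_of_mem d hx
    have hlt : (B.image d).card * (n0 - 1) < B.card := by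
      obtain ⟨p, rfl⟩ : ∃ p, n0 = p + 2 := ⟨n0 - 2, by omega⟩
      have h1 : Z.card ≤ p + 1 := by omega
      have h2 : I.card ≤ p + 1 := by omega
      have h3 : (B.image d).card ≤ p + 1 := by omega
      have h4 : 3 * (p + 2) ^ 2 ≤ Z.card + I.card + B.card := hcard
      have h5 : (p + 1) * (p + 1) < B.card := by nlinarith
      calc (B.image d).card * (p + 2 - 1) ≤ (p + 1) * (p + 1) :=
            Nat.mul_le_mul h3 (by omega)
        _ < B.card := h5
    obtain ⟨v, _, hfib⟩ :=
      Finset.exists_lt_card_fiber_of_mul_lt_card_of_maps_to hmaps hlt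
    set C : Finset (Fin (3 * n0 ^ 2)) := B.filter (fun x => d x = v) with hCdef
    have hCcard : n0 ≤ C.card := by
      have : n0 - 1 < C.card := hfib
      omega
    have hCprop : ∀ i ∈ C, i ∈ B ∧ d i = v := fun i hi => ⟨(mem_filter.mp hi).1,
      (mem_filter.mp hi).2⟩
    refine ⟨C, hCcard, ?_⟩
    intro e j he hj
    obtain ⟨i, i', hne, hrep⟩ := edge_rep e
    have hi : i ∈ e.val := by rw [hrep]; exact Sym2.mem_mk_left i i'
    obtain ⟨hiB, hdi⟩ := hCprop i (he i hi)
    obtain ⟨hjB, hdj⟩ := hCprop j hj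
    obtain ⟨hbi2, _⟩ := hBprop i hiB
    obtain ⟨hbj2, _⟩ := hBprop j hjB
    have horth := hip e i hi
    have hdij : d i = d j := by rw [hdi, hdj]
    have hfst : b i 0 * b j 2 = b j 0 * b i 2 :=
      (div_eq_div_iff hbi2.ne' hbj2.ne').mp (congrArg Prod.fst hdij)
    have hsnd : b i 1 * b j 2 = b j 1 * b i 2 :=
      (div_eq_div_iff hbi2.ne' hbj2.ne').mp (congrArg Prod.snd hdij)
    have hMul : M e j * b i 2 = 0 := by
      rw [hM_ip]
      linear_combination (a e 0) * (- hfst) + (a e 1) * (- hsnd) + (b j 2) * horth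
    rcases mul_eq_zero.mp hMul with h | h
    · exact h
    · exact absurd h hbi2.ne'

/-! ### The induction step -/

lemma covval_step {n0 k : ℕ} (h2 : 2 ≤ n0) (h : CovVal (3 * n0 ^ 2) (k + 1)) :
    CovVal n0 k := by
  classical
  obtain ⟨M, hsoc, hsum⟩ := h
  have hnn : ∀ l e j, 0 ≤ M l e j := by
    intro l e j
    obtain ⟨a, b, ha, hb, hab⟩ := hsoc l
    rw [hab, Fin.sum_univ_three]
    exact ip_nonneg (ha e) (hb j)
  have hzero : ∀ l e j, j ∈ e.val → M l e j = 0 := by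
    intro l e j hj
    have h0 : (∑ l, M l e j) = 0 := (hsum e j).mpr hj
    exact (Finset.sum_eq_zero_iff_of_nonneg (fun i _ => hnn i e j)).mp h0 l (mem_univ l)
  obtain ⟨C, hCcard, hblock⟩ := key_lemma n0 h2 (M 0) (hsoc 0) (hzero 0)
  obtain ⟨C', hC'sub, hC'card⟩ := Finset.exists_subset_card_eq hCcard
  set φ := (Finset.equivFinOfCardEq hC'card).symm with hφ
  set f : Fin n0 ↪ Fin (3 * n0 ^ 2) :=
    ⟨fun j => (φ j).val, fun x y h => φ.injective (Subtype.ext h)⟩ with hfdef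
  have hfC : ∀ j, f j ∈ C := fun j => hC'sub (φ j).2
  refine ⟨fun l e j => M l.succ (emap f e) (f j), ?_, ?_⟩
  · intro l
    obtain ⟨a, b, ha, hb, hab⟩ := hsoc l.succ
    exact ⟨fun e => a (emap f e), fun j => b (f j), fun e => ha _, fun j => hb _,
      fun e j => hab _ _⟩
  · intro e j
    have h0 : M 0 (emap f e) (f j) = 0 := by
      apply hblock
      · intro i hi
        obtain ⟨i0, _, rfl⟩ := mem_emap_src f e i hi
        exact hfC i0
      · exact hfC j
    have hsum' := hsum (emap f e) (f j)
    rw [Fin.sum_univ_succ, h0, zero_add] at hsum'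
    rw [hsum']
    exact mem_emap f e j

lemma covSocA_mono : Monotone covSocA := by
  intro m n h
  rw [covSocA_eq, covSocA_eq]
  have hmem : CovVal n (sInf {k | CovVal n k}) := Nat.sInf_mem (covval_exists n)
  exact Nat.sInf_le (hmem.restrict (Fin.castLEEmb h))

lemma covSocA_step (n0 : ℕ) (h2 : 2 ≤ n0) :
    covSocA n0 + 1 ≤ covSocA (3 * n0 ^ 2) := by
  have hmem : CovVal (3 * n0 ^ 2) (covSocA (3 * n0 ^ 2)) := by
    rw [covSocA_eq]
    exact Nat.sInf_mem (covval_exists _)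
  rcases Nat.eq_zero_or_pos (covSocA (3 * n0 ^ 2)) with h0 | hpos
  · exfalso
    rw [h0] at hmem
    exact covval_zero (by nlinarith) hmem
  · obtain ⟨k, hk⟩ := Nat.exists_eq_add_of_lt hpos
    rw [zero_add] at hk
    rw [hk] at hmem
    have := covval_step h2 hmem
    have hle : covSocA n0 ≤ k := by
      rw [covSocA_eq]; exact Nat.sInf_le this
    omega

/-! ### Main theorem -/

theorem covSocA_grows :
    (∀ n0 : ℕ, 2 ≤ n0 → covSocA n0 + 1 ≤ covSocA (3 * n0 ^ 2)) ∧
    Filter.Tendsto covSocA Filter.atTop Filter.atTop := by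
  constructor
  · exact covSocA_step
  · -- iterate the step along the sequence g
    set g : ℕ → ℕ := fun m => Nat.rec 2 (fun _ x => 3 * x ^ 2) m with hg
    have hg2 : ∀ m, 2 ≤ g m := by
      intro m
      induction m with
      | zero => simp [hg]
      | succ m ih =>
        have hgs : g (m + 1) = 3 * (g m) ^ 2 := rfl
        rw [hgs]; nlinarith
    have hgval : ∀ m, m ≤ covSocA (g m) := by
      intro m
      induction m with
      | zero => exact Nat.zero_le _
      | succ m ih =>
        have hstep := covSocA_step (g m) (hg2 m)
        have : g (m + 1) = 3 * (g m) ^ 2 := rfl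
        rw [this]
        omega
    exact Filter.tendsto_atTop_atTop_of_monotone covSocA_mono
      (fun b => ⟨g b, hgval b⟩)
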